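/- Let d₁ ≥ 1 be an integer, s > 0, R > 0, μ > 0 and λ ∈ ℝ. Let v : [0,R] → ℝ be twice continuously differentiable with v'(0) = 0, v(R) = 0, ∫₀^R v(r)² r^{d₁-1} dr = 1, and satisfying −v''(r) − ((d₁−1)/r) v'(r) + μ r^{2s} v(r) = λ v(r) for all r ∈ (0,R). Then ∫₀^R v'(r)² r^{d₁-1} dr − (R^{d₁}/2) v'(R)² = s μ ∫₀^R r^{2s+d₁-1} v(r)² dr. -/

import Mathlib

open MeasureTheory Set Filter intervalIntegral

private lemma aux_npow_deriv_mul (x : ℝ) (n : ℕ) : (n : ℝ) * x ^ (n - 1) * x = n * x ^ n := by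
  cases n with
  | zero => simp
  | succ m => simp [pow_succ]; ring

/-- for a `C²` normalized radial Dirichlet eigenfunction `v` of the
Schrödinger operator `-Δ + μ r^{2s}` on the ball of radius `R` in `ℝ^{d₁}`,
`∫₀^R v'(r)² r^{d₁-1} dr − (R^{d₁}/2) v'(R)² = s μ ∫₀^R r^{2s+d₁-1} v(r)² dr`. -/
theorem radial_schrodinger_pohozaev_identity (d₁ : ℕ) (hd₁ : 1 ≤ d₁)
    (s R μ lam : ℝ) (hs : 0 < s) (hR : 0 < R) (hμ : 0 < μ)
    (v v' v'' : ℝ → ℝ)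
    (hderiv₁ : ∀ r ∈ Set.Icc 0 R, HasDerivWithinAt v (v' r) (Set.Icc 0 R) r)
    (hderiv₂ : ∀ r ∈ Set.Icc 0 R, HasDerivWithinAt v' (v'' r) (Set.Icc 0 R) r)
    (hcont : ContinuousOn v'' (Set.Icc 0 R))
    (hv'0 : v' 0 = 0) (hvR : v R = 0)
    (hnorm : ∫ r in (0:ℝ)..R, (v r) ^ 2 * r ^ (d₁ - 1) = 1)
    (hode : ∀ r ∈ Set.Ioo 0 R,
      -(v'' r) - (((d₁ : ℝ) - 1) / r) * v' r + μ * r ^ (2 * s) * v r = lam * v r) :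
    (∫ r in (0:ℝ)..R, (v' r) ^ 2 * r ^ (d₁ - 1)) - R ^ d₁ / 2 * (v' R) ^ 2 =
      s * μ * ∫ r in (0:ℝ)..R, r ^ (2 * s + (d₁ : ℝ) - 1) * (v r) ^ 2 := by
  obtain ⟨n, rfl⟩ : ∃ n, d₁ = n + 1 := ⟨d₁ - 1, (Nat.succ_pred_eq_of_pos hd₁).symm⟩
  clear hnorm
  have hexp : 2 * s + ((n + 1 : ℕ) : ℝ) - 1 = 2 * s + (n : ℝ) := by push_cast; ring
  simp only [Nat.add_sub_cancel, hexp] at hode ⊢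
  -- notation
  set G : ℝ → ℝ := fun x =>
    ((n : ℝ) + 1) / 2 * (x ^ n * (v x * v' x)) + 1 / 2 * (x ^ (n + 1) * (v' x) ^ 2)
      - μ / 2 * (x ^ (2 * s + (n : ℝ) + 1) * (v x) ^ 2)
      + lam / 2 * (x ^ (n + 1) * (v x) ^ 2) with hGdef
  set f : ℝ → ℝ := fun x => (v' x) ^ 2 * x ^ n - s * μ * (x ^ (2 * s + (n : ℝ)) * (v x) ^ 2)
    with hfdef
  have hcv : ContinuousOn v (Set.Icc 0 R) := fun r hr => (hderiv₁ r hr).continuousWithinAt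
  have hcv' : ContinuousOn v' (Set.Icc 0 R) := fun r hr => (hderiv₂ r hr).continuousWithinAt
  have hrpc : ∀ p : ℝ, 0 < p → ContinuousOn (fun x : ℝ => x ^ p) (Set.Icc 0 R) :=
    fun p hp x _ => (Real.continuousAt_rpow_const x p (Or.inr hp.le)).continuousWithinAt
  have hps : 0 < 2 * s + (n : ℝ) := by positivity
  have hps1 : 0 < 2 * s + (n : ℝ) + 1 := by positivity
  -- continuity of G
  have hGc : ContinuousOn G (Set.Icc 0 R) := by
    apply ContinuousOn.add
    apply ContinuousOn.sub
    apply ContinuousOn.add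
    · exact continuousOn_const.mul ((continuous_pow n).continuousOn.mul (hcv.mul hcv'))
    · exact continuousOn_const.mul ((continuous_pow (n+1)).continuousOn.mul (hcv'.pow 2))
    · exact continuousOn_const.mul ((hrpc _ hps1).mul (hcv.pow 2))
    · exact continuousOn_const.mul ((continuous_pow (n+1)).continuousOn.mul (hcv.pow 2))
  -- continuity of f
  have hfc : ContinuousOn f (Set.Icc 0 R) := by
    apply ContinuousOn.sub
    · exact (hcv'.pow 2).mul (continuous_pow n).continuousOn
    · exact continuousOn_const.mul ((hrpc _ hps).mul (hcv.pow 2))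
  have hfint : IntervalIntegrable f volume 0 R := by
    apply ContinuousOn.intervalIntegrable
    rwa [Set.uIcc_of_le hR.le]
  -- derivative of G on the interior
  have hGd : ∀ x ∈ Set.Ioo 0 R, HasDerivWithinAt G (f x) (Set.Ioi x) x := by
    intro x hx
    obtain ⟨hx0, hxR⟩ := hx
    have hmem : Set.Icc 0 R ∈ nhds x := Icc_mem_nhds hx0 hxR
    have hxI : x ∈ Set.Icc 0 R := ⟨hx0.le, hxR.le⟩
    have hv : HasDerivAt v (v' x) x := (hderiv₁ x hxI).hasDerivAt hmem
    have hv' : HasDerivAt v' (v'' x) x := (hderiv₂ x hxI).hasDerivAt hmem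
    have hp1 : HasDerivAt (fun y : ℝ => y ^ n * (v y * v' y))
        ((n : ℝ) * x ^ (n - 1) * (v x * v' x) + x ^ n * (v' x * v' x + v x * v'' x)) x :=
      (hasDerivAt_pow n x).mul (hv.mul hv')
    have hp2 : HasDerivAt (fun y : ℝ => y ^ (n + 1) * (v' y) ^ 2)
        (((n : ℝ) + 1) * x ^ n * (v' x) ^ 2
          + x ^ (n + 1) * ((2 : ℕ) * (v' x) ^ 1 * v'' x)) x := by
      have := (hasDerivAt_pow (n + 1) x).fun_mul (hv'.fun_pow 2)
      simpa using this
    have hp4 : HasDerivAt (fun y : ℝ => y ^ (n + 1) * (v y) ^ 2)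
        (((n : ℝ) + 1) * x ^ n * (v x) ^ 2
          + x ^ (n + 1) * ((2 : ℕ) * (v x) ^ 1 * v' x)) x := by
      have := (hasDerivAt_pow (n + 1) x).fun_mul (hv.fun_pow 2)
      simpa using this
    have hrp : HasDerivAt (fun y : ℝ => y ^ (2 * s + (n : ℝ) + 1))
        ((2 * s + (n : ℝ) + 1) * x ^ (2 * s + (n : ℝ))) x := by
      have h := Real.hasDerivAt_rpow_const (x := x) (p := 2 * s + (n : ℝ) + 1) (Or.inl hx0.ne')
      simpa [show 2 * s + (n : ℝ) + 1 - 1 = 2 * s + (n : ℝ) by ring] using h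
    have hp3 : HasDerivAt (fun y : ℝ => y ^ (2 * s + (n : ℝ) + 1) * (v y) ^ 2)
        ((2 * s + (n : ℝ) + 1) * x ^ (2 * s + (n : ℝ)) * (v x) ^ 2
          + x ^ (2 * s + (n : ℝ) + 1) * ((2 : ℕ) * (v x) ^ 1 * v' x)) x := by
      have := hrp.fun_mul (hv.fun_pow 2)
      simpa using this
    have hG : HasDerivAt G
        (((n : ℝ) + 1) / 2 * ((n : ℝ) * x ^ (n - 1) * (v x * v' x)
            + x ^ n * (v' x * v' x + v x * v'' x))
          + 1 / 2 * (((n : ℝ) + 1) * x ^ n * (v' x) ^ 2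
            + x ^ (n + 1) * ((2 : ℕ) * (v' x) ^ 1 * v'' x))
          - μ / 2 * ((2 * s + (n : ℝ) + 1) * x ^ (2 * s + (n : ℝ)) * (v x) ^ 2
            + x ^ (2 * s + (n : ℝ) + 1) * ((2 : ℕ) * (v x) ^ 1 * v' x))
          + lam / 2 * (((n : ℝ) + 1) * x ^ n * (v x) ^ 2
            + x ^ (n + 1) * ((2 : ℕ) * (v x) ^ 1 * v' x))) x :=
      (((hp1.const_mul _).add (hp2.const_mul _)).sub (hp3.const_mul _)).add (hp4.const_mul _)
    have hx : x ≠ 0 := hx0.ne'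
    have hmul : x * v'' x = μ * x ^ (2 * s) * v x * x - lam * v x * x - (n : ℝ) * v' x := by
      have h := hode x ⟨hx0, hxR⟩
      have hcast : ((n : ℝ) + 1 - 1) = (n : ℝ) := by ring
      push_cast at h
      rw [hcast] at h
      have hinv : (n : ℝ) / x * x = (n : ℝ) := div_mul_cancel₀ _ hx
      linear_combination (-x) * h + (-(v' x)) * hinv
    have e1 : x ^ (2 * s + (n : ℝ) + 1) = x ^ (2 * s) * x ^ n * x := by
      rw [Real.rpow_add_one hx0.ne', Real.rpow_add hx0, Real.rpow_natCast]
    have e2 : x ^ (2 * s + (n : ℝ)) = x ^ (2 * s) * x ^ n := by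
      rw [Real.rpow_add hx0, Real.rpow_natCast]
    have e3 : (n : ℝ) * x ^ (n - 1) * x = n * x ^ n := aux_npow_deriv_mul x n
    have hkey : (((n : ℝ) + 1) / 2 * ((n : ℝ) * x ^ (n - 1) * (v x * v' x)
            + x ^ n * (v' x * v' x + v x * v'' x))
          + 1 / 2 * (((n : ℝ) + 1) * x ^ n * (v' x) ^ 2
            + x ^ (n + 1) * ((2 : ℕ) * (v' x) ^ 1 * v'' x))
          - μ / 2 * ((2 * s + (n : ℝ) + 1) * x ^ (2 * s + (n : ℝ)) * (v x) ^ 2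
            + x ^ (2 * s + (n : ℝ) + 1) * ((2 : ℕ) * (v x) ^ 1 * v' x))
          + lam / 2 * (((n : ℝ) + 1) * x ^ n * (v x) ^ 2
            + x ^ (n + 1) * ((2 : ℕ) * (v x) ^ 1 * v' x))) = f x := by
      rw [hfdef]
      rw [e1, e2]
      refine mul_right_cancel₀ hx ?_
      push_cast
      linear_combination (((n : ℝ) + 1) / 2 * (v x * v' x)) * e3
        + (((n : ℝ) + 1) / 2 * x ^ n * v x + x ^ (n + 1) * v' x) * hmul
        + (s * μ * v x ^ 2 * x) * e2
    rw [← hkey]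
    exact hG.hasDerivWithinAt
  have hFTC : (∫ r in (0:ℝ)..R, f r) = G R - G 0 :=
    intervalIntegral.integral_eq_sub_of_hasDeriv_right_of_le hR.le hGc hGd hfint
  have hGR : G R = R ^ (n + 1) * (v' R) ^ 2 / 2 := by
    simp only [hGdef, hvR]
    ring
  have hG0 : G 0 = 0 := by
    simp [hGdef, hv'0, Real.zero_rpow hps1.ne', zero_pow (Nat.succ_ne_zero n)]
  have hi1 : IntervalIntegrable (fun r : ℝ => (v' r) ^ 2 * r ^ n) volume 0 R := by
    apply ContinuousOn.intervalIntegrable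
    rw [Set.uIcc_of_le hR.le]
    exact (hcv'.pow 2).mul (continuous_pow n).continuousOn
  have hi2 : IntervalIntegrable (fun r : ℝ => r ^ (2 * s + (n : ℝ)) * (v r) ^ 2) volume 0 R := by
    apply ContinuousOn.intervalIntegrable
    rw [Set.uIcc_of_le hR.le]
    exact (hrpc _ hps).mul (hcv.pow 2)
  have hsplit : (∫ r in (0:ℝ)..R, f r)
      = (∫ r in (0:ℝ)..R, (v' r) ^ 2 * r ^ n)
        - s * μ * ∫ r in (0:ℝ)..R, r ^ (2 * s + (n : ℝ)) * (v r) ^ 2 := by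
    rw [hfdef]
    rw [intervalIntegral.integral_sub hi1 (hi2.const_mul (s * μ)),
      intervalIntegral.integral_const_mul]
  rw [hsplit, hGR, hG0] at hFTC
  linarith [hFTC]
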